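/- arXiv:2602.24001 — 3 statements merged into one kernel-verified Lean document; each statement's English description precedes it below -/
import Mathlib

section
/- Let 0 < κ < 2π and 0 < γ < 1, and let u_κ, v_κ be defined by u_κ(α) = κ(sin(κα) - (1-cos(κα))·sin κ/(1-cos κ)) and v_κ(α) = κ(1-γ)(sin(κα) + cos(κα)·sin κ/(1-cos κ)). Then ∫₀¹ (u_κ(α) + v_κ(α)) dα > 2(1-γ) > 0. -/
open Real intervalIntegral

theorem stmt_3 (κ γ : ℝ) (h0 : 0 < κ) (h2 : κ < 2 * π) (hγ0 : 0 < γ) (hγ1 : γ < 1)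
    (u v : ℝ → ℝ)
    (hu : ∀ α, u α = κ * (Real.sin (κ * α) - (1 - Real.cos (κ * α)) * Real.sin κ / (1 - Real.cos κ)))
    (hv : ∀ α, v α = κ * (1 - γ) * (Real.sin (κ * α) + Real.cos (κ * α) * Real.sin κ / (1 - Real.cos κ))) :
    (∫ α in (0:ℝ)..1, (u α + v α)) > 2 * (1 - γ) ∧ 2 * (1 - γ) > 0 := by
  have hπ := Real.pi_pos
  have hx0 : 0 < κ / 2 := by linarith
  have hxπ : κ / 2 < π := by linarith
  have hsx : 0 < Real.sin (κ / 2) := Real.sin_pos_of_pos_of_lt_pi hx0 hxπ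
  have hpyth := Real.sin_sq_add_cos_sq (κ / 2)
  have hcos2 : Real.cos κ = 1 - 2 * Real.sin (κ / 2) ^ 2 := by
    have h := Real.cos_two_mul (κ / 2)
    rw [show 2 * (κ / 2) = κ by ring] at h
    nlinarith
  have hsin2 : Real.sin κ = 2 * Real.sin (κ / 2) * Real.cos (κ / 2) := by
    have h := Real.sin_two_mul (κ / 2)
    rw [show 2 * (κ / 2) = κ by ring] at h
    exact h
  have hc : 0 < 1 - Real.cos κ := by nlinarith
  have hc' : (1 : ℝ) - Real.cos κ ≠ 0 := ne_of_gt hc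
  -- key inequality: sin x - x cos x > 0 for x = κ/2
  have hsub : 0 < Real.sin (κ / 2) - (κ / 2) * Real.cos (κ / 2) := by
    rcases le_or_gt (Real.cos (κ / 2)) 0 with h | h
    · nlinarith
    · have hlt : κ / 2 < π / 2 := by
        by_contra hle
        push_neg at hle
        have : Real.cos (κ / 2) ≤ 0 :=
          Real.cos_nonpos_of_pi_div_two_le_of_le hle (by linarith)
        linarith
      have htan := Real.lt_tan hx0 hlt
      rw [Real.tan_eq_sin_div_cos] at htan
      have := (lt_div_iff₀ h).mp htan
      linarith
  have key : 0 < 2 * (1 - Real.cos κ) - κ * Real.sin κ := by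
    rw [hcos2, hsin2]
    nlinarith
  set s := Real.sin κ / (1 - Real.cos κ) with hs
  have hint : (∫ α in (0:ℝ)..1, (u α + v α))
      = (1 - Real.cos κ) - s * (κ - Real.sin κ) + (1 - γ) * (1 - Real.cos κ)
        + (1 - γ) * s * Real.sin κ := by
    have hderiv : ∀ α ∈ Set.uIcc (0:ℝ) 1, HasDerivAt
        (fun α => -Real.cos (κ * α) - s * (κ * α - Real.sin (κ * α))
          + (1 - γ) * (-Real.cos (κ * α)) + (1 - γ) * s * Real.sin (κ * α))
        (u α + v α) α := by
      intro α _
      have h1 : HasDerivAt (fun α : ℝ => κ * α) κ α := by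
        simpa using (hasDerivAt_id α).const_mul κ
      have hcosd : HasDerivAt (fun α : ℝ => Real.cos (κ * α)) (-Real.sin (κ * α) * κ) α :=
        (Real.hasDerivAt_cos (κ * α)).comp α h1
      have hsind : HasDerivAt (fun α : ℝ => Real.sin (κ * α)) (Real.cos (κ * α) * κ) α :=
        (Real.hasDerivAt_sin (κ * α)).comp α h1
      have H := ((hcosd.neg.sub ((h1.sub hsind).const_mul s)).add
        ((hcosd.neg).const_mul (1 - γ))).add (hsind.const_mul ((1 - γ) * s))
      refine H.congr_deriv ?_
      rw [hu, hv, hs]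
      field_simp
      ring
    have hcont : IntervalIntegrable (fun α => u α + v α) MeasureTheory.volume 0 1 := by
      apply Continuous.intervalIntegrable
      have : (fun α => u α + v α) = fun α =>
          κ * (Real.sin (κ * α) - (1 - Real.cos (κ * α)) * Real.sin κ / (1 - Real.cos κ))
          + κ * (1 - γ) * (Real.sin (κ * α) + Real.cos (κ * α) * Real.sin κ / (1 - Real.cos κ)) := by
        funext α; rw [hu, hv]
      rw [this]
      fun_prop
    rw [intervalIntegral.integral_eq_sub_of_hasDerivAt hderiv hcont]
    simp [Real.cos_zero, Real.sin_zero]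
    ring
  constructor
  · rw [hint]
    have hval : (1 - Real.cos κ) - s * (κ - Real.sin κ) + (1 - γ) * (1 - Real.cos κ)
        + (1 - γ) * s * Real.sin κ - 2 * (1 - γ)
        = (2 * (1 - Real.cos κ) - κ * Real.sin κ) / (1 - Real.cos κ) := by
      rw [hs]
      field_simp
      nlinarith [Real.sin_sq_add_cos_sq κ]
    have hpos : 0 < (2 * (1 - Real.cos κ) - κ * Real.sin κ) / (1 - Real.cos κ) :=
      div_pos key hc
    linarith
  · linarith
end

section
/- Let β > 0, 0 < γ < 1, and κ = (1/β)·√((1-γ)/γ). Suppose X : [0,1] → ℝ² of the form X(α) = (A sin(κα) + B cos(κα))·(1,γ) + (Cα + D)·(1,1) satisfies the boundary conditions X₁(α) - X₂(α) = 0 and (d/dα)X₂(α) = 0 at α = 0 and α = 1 (where X = (X₁, X₂) = (b, ψ)). If κ is not an integer multiple of 2π, then A = B = C = 0, i.e., X is a constant multiple of (1,1). -/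
open Real

theorem stmt_6 (β γ : ℝ) (hβ : 0 < β) (hγ0 : 0 < γ) (hγ1 : γ < 1)
    (κ : ℝ) (hκ : κ = (1 / β) * Real.sqrt ((1 - γ) / γ))
    (A B C D : ℝ) (b ψ : ℝ → ℝ)
    (hb : ∀ α, b α = (A * Real.sin (κ * α) + B * Real.cos (κ * α)) + (C * α + D))
    (hψ : ∀ α, ψ α = γ * (A * Real.sin (κ * α) + B * Real.cos (κ * α)) + (C * α + D))
    (hbc0 : b 0 - ψ 0 = 0) (hbc1 : b 1 - ψ 1 = 0)
    (hd0 : deriv ψ 0 = 0) (hd1 : deriv ψ 1 = 0)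
    (hnot : ¬ ∃ n : ℤ, κ = 2 * π * n) :
    A = 0 ∧ B = 0 ∧ C = 0 := by
  have hγne : γ ≠ 0 := ne_of_gt hγ0
  have hκpos : 0 < κ := by
    rw [hκ]
    apply mul_pos (by positivity)
    apply Real.sqrt_pos.mpr
    apply div_pos (by linarith) hγ0
  have hκne : κ ≠ 0 := ne_of_gt hκpos
  have hψfun : ψ = fun α => γ * (A * Real.sin (κ * α) + B * Real.cos (κ * α)) + (C * α + D) :=
    funext hψ
  have hder : ∀ x : ℝ, deriv ψ x =
      γ * (A * (Real.cos (κ * x) * κ) - B * (Real.sin (κ * x) * κ)) + C := by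
    intro x
    have hlin : HasDerivAt (fun α : ℝ => κ * α) κ x := by
      simpa using (hasDerivAt_id x).const_mul κ
    have hsin : HasDerivAt (fun α : ℝ => Real.sin (κ * α)) (Real.cos (κ * x) * κ) x :=
      hlin.sin
    have hcos : HasDerivAt (fun α : ℝ => Real.cos (κ * α)) (-Real.sin (κ * x) * κ) x :=
      hlin.cos
    have h1 : HasDerivAt (fun α : ℝ => γ * (A * Real.sin (κ * α) + B * Real.cos (κ * α)) + (C * α + D))
        (γ * (A * (Real.cos (κ * x) * κ) + B * (-Real.sin (κ * x) * κ)) + C * 1) x := by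
      simpa [Pi.add_def] using (((hsin.const_mul A).add (hcos.const_mul B)).const_mul γ).add
        (((hasDerivAt_id x).const_mul C).add_const D)
    rw [hψfun]
    rw [h1.deriv]
    ring
  have e0 := hd0
  rw [hder 0] at e0
  norm_num at e0
  have e1 := hd1
  rw [hder 1] at e1
  norm_num at e1
  have h0 := hbc0
  rw [hb 0, hψ 0] at h0
  norm_num at h0
  have h1 := hbc1
  rw [hb 1, hψ 1] at h1
  norm_num at h1
  have hBz : B = 0 := by
    have h2 : (1 - γ) * B = 0 := by linear_combination h0
    rcases mul_eq_zero.mp h2 with h | h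
    · linarith
    · exact h
  have hs : A * Real.sin κ = 0 := by
    have h2 : (1 - γ) * (A * Real.sin κ) = 0 := by
      linear_combination h1 - Real.cos κ * h0
    rcases mul_eq_zero.mp h2 with h | h
    · linarith
    · exact h
  have h3 : A * (Real.cos κ - 1) - B * Real.sin κ = 0 := by
    have h4 : γ * κ * (A * (Real.cos κ - 1) - B * Real.sin κ) = 0 := by
      linear_combination e1 - e0
    rcases mul_eq_zero.mp h4 with h | h
    · exact absurd h (mul_ne_zero hγne hκne)
    · exact h
  by_cases hA : A = 0
  · refine ⟨hA, hBz, ?_⟩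
    rw [hA] at e0
    simpa using e0
  · exfalso
    have hsin : Real.sin κ = 0 := by
      rcases mul_eq_zero.mp hs with h | h
      · exact absurd h hA
      · exact h
    have hcos : Real.cos κ = 1 := by
      rw [hBz] at h3
      have h5 : A * (Real.cos κ - 1) = 0 := by linarith
      rcases mul_eq_zero.mp h5 with h | h
      · exact absurd h hA
      · linarith
    obtain ⟨n, hn⟩ := (Real.cos_eq_one_iff κ).mp hcos
    exact hnot ⟨n, by linarith⟩
end

section
/- Let γ ∈ (0,1) and β₀ = (1/(2π))√((1-γ)/γ). The pair (u,v) with u(α) = A* sin(2πα) + D*(cos(2πα) - 1) and v(α) = 4π²γ(A* sin(2πα) + D* cos(2πα)), for any A*, D* ∈ ℝ, satisfies γu'' + v = 0 and (β₀²v - u)'' - v = 0 on (0,1), together with the boundary conditions u = 0 and (4π²γu - v)' = 0 at α = 0 and α = 1. -/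
open Real

noncomputable def Ftrig (a b c : ℝ) : ℝ → ℝ :=
  fun x => a * Real.sin (2 * π * x) + b * Real.cos (2 * π * x) + c

lemma hasDerivAt_Ftrig (a b c x : ℝ) :
    HasDerivAt (Ftrig a b c) (Ftrig (-(2 * π * b)) (2 * π * a) 0 x) x := by
  have h1 : HasDerivAt (fun x : ℝ => 2 * π * x) (2 * π) x := by
    simpa using (hasDerivAt_id x).const_mul (2 * π)
  have hs := (Real.hasDerivAt_sin (2 * π * x)).comp x h1
  have hc := (Real.hasDerivAt_cos (2 * π * x)).comp x h1
  have h := ((hs.const_mul a).add (hc.const_mul b)).add_const c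
  have : HasDerivAt (Ftrig a b c)
      (a * (Real.cos (2 * π * x) * (2 * π)) + b * (-Real.sin (2 * π * x) * (2 * π))) x := h
  convert this using 1
  simp [Ftrig]; ring

lemma deriv_Ftrig (a b c : ℝ) :
    deriv (Ftrig a b c) = Ftrig (-(2 * π * b)) (2 * π * a) 0 := by
  funext x
  exact (hasDerivAt_Ftrig a b c x).deriv

theorem stmt_8 (γ : ℝ) (hγ0 : 0 < γ) (hγ1 : γ < 1)
    (β₀ : ℝ) (hβ₀ : β₀ = (1 / (2 * π)) * Real.sqrt ((1 - γ) / γ))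
    (As Ds : ℝ) (u v : ℝ → ℝ)
    (hu : ∀ α, u α = As * Real.sin (2 * π * α) + Ds * (Real.cos (2 * π * α) - 1))
    (hv : ∀ α, v α = 4 * π ^ 2 * γ * (As * Real.sin (2 * π * α) + Ds * Real.cos (2 * π * α))) :
    (∀ α ∈ Set.Ioo (0:ℝ) 1,
        γ * deriv (deriv u) α + v α = 0 ∧
        deriv (deriv (fun x => β₀ ^ 2 * v x - u x)) α - v α = 0) ∧
    u 0 = 0 ∧ u 1 = 0 ∧
    deriv (fun x => 4 * π ^ 2 * γ * u x - v x) 0 = 0 ∧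
    deriv (fun x => 4 * π ^ 2 * γ * u x - v x) 1 = 0 := by
  have hπ : (π : ℝ) ≠ 0 := Real.pi_ne_zero
  have hγ : γ ≠ 0 := ne_of_gt hγ0
  -- β₀² * 4π²γ = 1 - γ
  have hβ2 : β₀ ^ 2 * (4 * π ^ 2 * γ) = 1 - γ := by
    have hnn : (0:ℝ) ≤ (1 - γ) / γ := div_nonneg (by linarith) (le_of_lt hγ0)
    have hsq : Real.sqrt ((1 - γ) / γ) ^ 2 = (1 - γ) / γ := Real.sq_sqrt hnn
    rw [hβ₀, mul_pow, hsq]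
    field_simp
    ring
  have hueq : u = Ftrig As Ds (-Ds) := by
    funext x; rw [hu]; simp [Ftrig]; ring
  have hveq : v = Ftrig (4 * π ^ 2 * γ * As) (4 * π ^ 2 * γ * Ds) 0 := by
    funext x; rw [hv]; simp [Ftrig]; ring
  have hwq : (fun x => β₀ ^ 2 * v x - u x) = Ftrig (-(γ * As)) (-(γ * Ds)) Ds := by
    funext x; rw [hv, hu]; simp only [Ftrig]
    linear_combination (As * Real.sin (2 * π * x) + Ds * Real.cos (2 * π * x)) * hβ2
  have hconst : (fun x => 4 * π ^ 2 * γ * u x - v x) = fun _ => -(4 * π ^ 2 * γ * Ds) := by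
    funext x; rw [hu, hv]; ring
  refine ⟨fun α _ => ⟨?_, ?_⟩, ?_, ?_, ?_, ?_⟩
  · rw [hueq, hveq, deriv_Ftrig, deriv_Ftrig]
    simp only [Ftrig]; ring
  · rw [hwq, hveq, deriv_Ftrig, deriv_Ftrig]
    simp only [Ftrig]; ring
  · rw [hu]; simp
  · rw [hu]; simp
  · rw [hconst]; simp
  · rw [hconst]; simp
end
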